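/- Let N > 4 be even and K > 0, and suppose K·sin(2π/N) ≤ P ≤ 2K. Then there exists θ̂₁ ∈ [0, π/2] satisfying the type-1 saddle equation for m = 0, namely 2K·cos(2θ̂₁/N − π/N)·sin((1 − 2/N)·θ̂₁ + π/N) = P. -/

import Mathlib

open Real

/-- Let `N > 4` be even, `K > 0`, and `K·sin(2π/N) ≤ P ≤ 2K`. Then there
exists `θ̂₁ ∈ [0, π/2]` satisfying the type-1 saddle equation for `m = 0`:
`2K·cos(2θ̂₁/N − π/N)·sin((1 − 2/N)·θ̂₁ + π/N) = P`. -/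
theorem type1_saddle_exists
    (N : ℕ) (hN : 4 < N) (hNeven : Even N) (K P : ℝ) (hK : 0 < K)
    (hlow : K * Real.sin (2 * π / N) ≤ P) (hhigh : P ≤ 2 * K) :
    ∃ θ ∈ Set.Icc (0 : ℝ) (π / 2),
      2 * K * Real.cos (2 * θ / N - π / N) *
        Real.sin ((1 - 2 / (N : ℝ)) * θ + π / N) = P := by
  set f : ℝ → ℝ := fun θ => 2 * K * Real.cos (2 * θ / N - π / N) *
      Real.sin ((1 - 2 / (N : ℝ)) * θ + π / N) with hf
  have hN0 : (N : ℝ) ≠ 0 := Nat.cast_ne_zero.2 (by omega)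
  have h0 : f 0 = K * Real.sin (2 * π / N) := by
    simp only [hf]
    rw [show 2 * (0:ℝ) / N - π / N = -(π / N) by ring, Real.cos_neg,
      show (1 - 2 / (N : ℝ)) * 0 + π / N = π / N by ring,
      show 2 * π / (N : ℝ) = 2 * (π / N) by ring, Real.sin_two_mul]
    ring
  have h1 : f (π / 2) = 2 * K := by
    simp only [hf]
    rw [show 2 * (π / 2) / N - π / N = 0 by field_simp; ring,
      show (1 - 2 / (N : ℝ)) * (π / 2) + π / N = π / 2 by field_simp; ring,
      Real.cos_zero, Real.sin_pi_div_two]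
    ring
  have hcont : ContinuousOn f (Set.Icc 0 (π / 2)) := by fun_prop
  have h2 : (0 : ℝ) ≤ π / 2 := by positivity
  have := intermediate_value_Icc h2 hcont
  rw [h0, h1] at this
  obtain ⟨θ, hθ, hfθ⟩ := this ⟨hlow, hhigh⟩
  exact ⟨θ, hθ, hfθ⟩
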